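/- Let p be a prime and let n, r be positive integers with r a proper divisor of n and n/r = 2 (so n = 2r). Set t = p^r + 1. If 0 ≤ b ≤ a ≤ n-1 and t divides p^a + p^b - 1, then p = 2. -/

import Mathlib

theorem stmt_1 (p n r a b : ℕ) (hp : p.Prime) (hr1 : 1 ≤ r) (hrn : r ∣ n) (hrltn : r < n)
    (hn : n = 2 * r) (hba : b ≤ a) (han : a ≤ n - 1)
    (ht : (p ^ r + 1) ∣ p ^ a + p ^ b - 1) : p = 2 := by
  have hp2 : 2 ≤ p := hp.two_le
  have hp1 : 1 ≤ p := le_trans (by norm_num) hp2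
  have hpa : 1 ≤ p ^ a := Nat.one_le_pow _ _ (by omega)
  have hpb : 1 ≤ p ^ b := Nat.one_le_pow _ _ (by omega)
  -- key bound: p^{r-1} * 2 ≤ p^r
  have hkey : 2 * p ^ (r - 1) ≤ p ^ r := by
    calc 2 * p ^ (r - 1) ≤ p * p ^ (r - 1) := Nat.mul_le_mul_right _ hp2
    _ = p ^ r := by rw [← pow_succ']; congr 1; omega
  have hbound : ∀ m : ℕ, m ≤ r - 1 → p ^ m ≤ p ^ (r - 1) :=
    fun m hm => Nat.pow_le_pow_right hp1 hm
  have han' : a ≤ 2 * r - 1 := by omega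
  -- case a < r is impossible
  have har : r ≤ a := by
    by_contra h
    push_neg at h
    have h1 : p ^ a ≤ p ^ (r - 1) := hbound a (by omega)
    have h2 : p ^ b ≤ p ^ (r - 1) := hbound b (by omega)
    have hpos : 0 < p ^ a + p ^ b - 1 := by omega
    have := Nat.le_of_dvd hpos ht
    have hrr : 1 ≤ p ^ r := Nat.one_le_pow _ _ (by omega)
    omega
  set a' := a - r with ha'
  have ha'r : a' ≤ r - 1 := by omega
  have hpa' : 1 ≤ p ^ a' := Nat.one_le_pow _ _ (by omega)
  have hsplit : (p : ℤ) ^ a = p ^ a' * (p ^ r + 1) - p ^ a' := by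
    have : a = a' + r := by omega
    rw [this, pow_add]; ring
  -- integer divisibility
  have htz : ((p : ℤ) ^ r + 1) ∣ (p : ℤ) ^ a + p ^ b - 1 := by
    have := Int.natCast_dvd_natCast.mpr ht
    push_cast [Nat.cast_sub (by omega : 1 ≤ p ^ a + p ^ b)] at this
    convert this using 2 <;> push_cast <;> ring
  have htz2 : ((p : ℤ) ^ r + 1) ∣ (p : ℤ) ^ b - p ^ a' - 1 := by
    have h1 : (p : ℤ) ^ b - p ^ a' - 1 =
        ((p : ℤ) ^ a + p ^ b - 1) - p ^ a' * (p ^ r + 1) := by rw [hsplit]; ring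
    rw [h1]; exact dvd_sub htz (dvd_mul_left _ _)
  rcases lt_or_ge b r with hbr | hbr
  · -- b < r : p^b - p^{a'} - 1 = 0
    have hb1 : (p : ℕ) ^ b ≤ p ^ (r - 1) := hbound b (by omega)
    have ha1 : (p : ℕ) ^ a' ≤ p ^ (r - 1) := hbound a' ha'r
    have hz : (p : ℤ) ^ b - p ^ a' - 1 = 0 := by
      apply Int.eq_zero_of_abs_lt_dvd htz2
      have hb1' : (p : ℤ) ^ b ≤ (p : ℤ) ^ (r - 1) := by exact_mod_cast hb1
      have ha1' : (p : ℤ) ^ a' ≤ (p : ℤ) ^ (r - 1) := by exact_mod_cast ha1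
      have h2 : (2 : ℤ) * p ^ (r - 1) ≤ p ^ r := by exact_mod_cast hkey
      have hpb' : (1 : ℤ) ≤ p ^ b := by exact_mod_cast hpb
      have hpa'' : (1 : ℤ) ≤ p ^ a' := by exact_mod_cast hpa'
      rw [abs_lt]; constructor <;> nlinarith
    have heq : p ^ b = p ^ a' + 1 := by
      have : (p : ℤ) ^ b = p ^ a' + 1 := by linarith
      exact_mod_cast this
    have ha0 : a' = 0 := by
      by_contra h
      have hbpos : b ≠ 0 := by
        intro hb0; rw [hb0, pow_zero] at heq; omega
      have h1 : p ∣ p ^ b := dvd_pow_self p hbpos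
      have h2 : p ∣ p ^ a' := dvd_pow_self p h
      rw [heq] at h1
      have : p ∣ 1 := (Nat.dvd_add_right h2).mp h1
      have := Nat.le_of_dvd one_pos this
      omega
    rw [ha0, pow_zero] at heq
    have hb0 : b ≠ 0 := by intro h; rw [h] at heq; simp at heq
    have : p ≤ p ^ b := Nat.le_self_pow hb0 p
    omega
  · -- b ≥ r
    set b' := b - r with hb'
    have hb'r : b' ≤ r - 1 := by omega
    have hsplitb : (p : ℤ) ^ b = p ^ b' * (p ^ r + 1) - p ^ b' := by
      have : b = b' + r := by omega
      rw [this, pow_add]; ring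
    have htz3 : ((p : ℤ) ^ r + 1) ∣ (p : ℤ) ^ a' + p ^ b' + 1 := by
      have h1 : (p : ℤ) ^ a' + p ^ b' + 1 =
          (p ^ b' * (p ^ r + 1)) - ((p : ℤ) ^ b - p ^ a' - 1) := by rw [hsplitb]; ring
      rw [h1]; exact dvd_sub (dvd_mul_left _ _) htz2
    have htn : ((p : ℕ) ^ r + 1) ∣ p ^ a' + p ^ b' + 1 := by
      have := htz3
      exact_mod_cast this
    have hle := Nat.le_of_dvd (by positivity) htn
    have ha1 : p ^ a' ≤ p ^ (r - 1) := hbound a' ha'r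
    have hb1 : p ^ b' ≤ p ^ (r - 1) := hbound b' hb'r
    -- p^r + 1 ≤ 2 p^{r-1} + 1, so p^r ≤ 2 p^{r-1} = 2 p^r / p, p ≤ 2
    have h3 : p ^ r ≤ 2 * p ^ (r - 1) := by omega
    have h4 : p * p ^ (r - 1) = p ^ r := by rw [← pow_succ']; congr 1; omega
    have hpr1 : 0 < p ^ (r - 1) := Nat.pow_pos (by omega)
    have h5 : p * p ^ (r - 1) ≤ 2 * p ^ (r - 1) := by omega
    have := Nat.le_of_mul_le_mul_right h5 hpr1
    omega
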